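/- For all natural numbers n and k with 0 ≤ k ≤ n, one has −(n+1) · binom(n,k) · ∫_0^1 p^k (1−p)^{n−k} ln p dp = Σ_{ℓ=0}^{n−k} 1/(n+1−ℓ). -/

import Mathlib

open MeasureTheory

/-- The Bloch coherent state of spin `n/2` with parameters `Ω = (p, φ)`:
components `(v_n(Ω))_k = √(binom n k) · p^(k/2) · (1-p)^((n-k)/2) · exp(-i k φ)`. -/
noncomputable def bloch (n : ℕ) (Ω : ℝ × ℝ) : EuclideanSpace ℂ (Fin (n + 1)) :=
  WithLp.toLp 2 fun k : Fin (n + 1) => (↑(Real.sqrt (n.choose k) * Real.sqrt Ω.1 ^ (k : ℕ) *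
      Real.sqrt (1 - Ω.1) ^ (n - (k : ℕ))) : ℂ) *
    Complex.exp (-((k : ℕ) : ℂ) * Complex.I * (Ω.2 : ℂ))

/-- A sphere point: `(p, φ) ∈ [0,1] × [0, 2π)`. -/
def IsSpherePt (Ω : ℝ × ℝ) : Prop :=
  Ω.1 ∈ Set.Icc (0 : ℝ) 1 ∧ Ω.2 ∈ Set.Ico (0 : ℝ) (2 * Real.pi)

/-- The overlap `⟨v_n(Ω), ψ⟩` (inner product conjugate-linear in the first argument). -/
noncomputable def ov (n : ℕ) (Ω : ℝ × ℝ) (ψ : EuclideanSpace ℂ (Fin (n + 1))) : ℂ :=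
  inner ℂ (bloch n Ω) ψ

/-- Normalized integral over the sphere: `∫ f(Ω) dΩ/4π = ∫_0^1 ∫_0^{2π} f(p,φ) dφ/(2π) dp`. -/
noncomputable def sphereInt (f : ℝ × ℝ → ℝ) : ℝ :=
  ∫ p in (0 : ℝ)..1, (∫ φ in (0 : ℝ)..(2 * Real.pi), f (p, φ)) / (2 * Real.pi)

/-- The Wehrl entropy of a state `ψ ∈ ℂ^(n+1)`. -/
noncomputable def wehrl (n : ℕ) (ψ : EuclideanSpace ℂ (Fin (n + 1))) : ℝ :=
  -((n : ℝ) + 1) * sphereInt (fun Ω => ‖ov n Ω ψ‖ ^ 2 * Real.log (‖ov n Ω ψ‖ ^ 2))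

/-- `ψ` is represented by the `n` sphere points `ω 1, …, ω n` with constant `c`:
`|⟨v_n(Ω), ψ⟩|² = c · ∏ k, |⟨v_1(Ω), v_1(ω k)⟩|²` for every sphere point `Ω`. -/
def Represents (n : ℕ) (ψ : EuclideanSpace ℂ (Fin (n + 1))) (ω : Fin n → ℝ × ℝ) (c : ℝ) :
    Prop :=
  (∀ k, IsSpherePt (ω k)) ∧
    ∀ Ω, IsSpherePt Ω → ‖ov n Ω ψ‖ ^ 2 = c * ∏ k : Fin n, ‖ov 1 Ω (bloch 1 (ω k))‖ ^ 2

/-- Squared chordal distance between two sphere points (sphere of radius 1/2):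
`d(ω, ω') = 1 - |⟨v_1(ω), v_1(ω')⟩|²`. -/
noncomputable def chord (ω ω' : ℝ × ℝ) : ℝ := 1 - ‖ov 1 ω (bloch 1 ω')‖ ^ 2

/-- `ψ` is a coherent state, i.e. `ψ = e^{iθ} v_n(Ω)` for some `θ` and some sphere point `Ω`. -/
def IsCoherent (n : ℕ) (ψ : EuclideanSpace ℂ (Fin (n + 1))) : Prop :=
  ∃ (θ : ℝ) (Ω : ℝ × ℝ), IsSpherePt Ω ∧ ψ = Complex.exp ((θ : ℂ) * Complex.I) • bloch n Ω

section EntropyAuxSection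
open intervalIntegral Set

namespace EntropyAux

/-- Interval integrability of `x^k (1-x)^m log x` on `[0,1]`. -/
lemma intInt (k m : ℕ) :
    IntervalIntegrable (fun x : ℝ => x ^ k * (1 - x) ^ m * Real.log x) volume 0 1 := by
  have hg : IntervalIntegrable (fun x : ℝ => 2 * x ^ (-(1/2) : ℝ)) volume 0 1 :=
    (intervalIntegrable_rpow' (by norm_num)).const_mul 2
  refine hg.mono_fun' ?_ ?_
  · exact (((measurable_id.pow_const k).mul
      ((measurable_const.sub measurable_id).pow_const m)).mul Real.measurable_log).aestronglyMeasurable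
  · have hmem : ∀ᵐ x ∂(volume.restrict (Set.uIoc (0:ℝ) 1)), x ∈ Set.uIoc (0:ℝ) 1 :=
      ae_restrict_mem measurableSet_uIoc
    filter_upwards [hmem] with x hx
    rw [Set.uIoc_of_le (by norm_num : (0:ℝ) ≤ 1)] at hx
    obtain ⟨hx0, hx1⟩ := hx
    have h1 : ‖x ^ k * (1 - x) ^ m * Real.log x‖ ≤ |Real.log x| := by
      rw [norm_mul, norm_mul]
      have e1 : ‖x ^ k‖ ≤ 1 := by
        rw [norm_pow, Real.norm_of_nonneg hx0.le]
        exact pow_le_one₀ hx0.le hx1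
      have e2 : ‖(1 - x) ^ m‖ ≤ 1 := by
        rw [norm_pow, Real.norm_of_nonneg (by linarith)]
        exact pow_le_one₀ (by linarith) (by linarith)
      calc ‖x ^ k‖ * ‖(1-x) ^ m‖ * ‖Real.log x‖
          ≤ 1 * 1 * ‖Real.log x‖ := by
            apply mul_le_mul (mul_le_mul e1 e2 (norm_nonneg _) zero_le_one) le_rfl
              (norm_nonneg _) (by norm_num)
        _ = |Real.log x| := by simp [Real.norm_eq_abs]
    refine h1.trans ?_
    have h2 : |Real.log x * x ^ ((1:ℝ)/2)| < 1 / (1/2) :=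
      Real.abs_log_mul_self_rpow_lt x (1/2) hx0 hx1 (by norm_num)
    have hxp : (0:ℝ) < x ^ ((1:ℝ)/2) := Real.rpow_pos_of_pos hx0 _
    have : |Real.log x| = |Real.log x * x ^ ((1:ℝ)/2)| * x ^ (-(1/2) : ℝ) := by
      rw [abs_mul, abs_of_pos hxp, mul_assoc, ← Real.rpow_add hx0]
      norm_num
    rw [this]
    have hx2 : (0:ℝ) ≤ x ^ (-(1/2) : ℝ) := (Real.rpow_pos_of_pos hx0 _).le
    calc |Real.log x * x ^ ((1:ℝ)/2)| * x ^ (-(1/2):ℝ)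
        ≤ (1/(1/2)) * x ^ (-(1/2):ℝ) := mul_le_mul_of_nonneg_right h2.le hx2
      _ = 2 * x ^ (-(1/2):ℝ) := by norm_num

lemma contInt (k m : ℕ) :
    IntervalIntegrable (fun x : ℝ => x ^ k * (1 - x) ^ m) volume 0 1 :=
  (Continuous.intervalIntegrable (by fun_prop) 0 1)

/-- Beta values. -/
lemma beta_eval : ∀ (m k : ℕ), ∫ x in (0:ℝ)..1, x ^ k * (1 - x) ^ m =
    (k.factorial * m.factorial : ℝ) / (k + m + 1).factorial := by
  intro m
  induction m with
  | zero =>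
    intro k
    simp only [pow_zero, mul_one, integral_pow]
    rw [Nat.factorial_succ]
    push_cast
    have : (k:ℝ) + 1 ≠ 0 := by positivity
    field_simp
    simp
  | succ m ih =>
    intro k
    -- FTC with F x = x^(k+1) (1-x)^(m+1)
    have hftc : ∫ x in (0:ℝ)..1,
        (((k:ℝ)+1) * x ^ k * (1-x)^(m+1) + x^(k+1) * (((m:ℝ)+1) * (1-x)^m * (-1))) = 0 := by
      have := integral_eq_sub_of_hasDerivAt (a := (0:ℝ)) (b := 1)
        (f := fun x : ℝ => x ^ (k+1) * (1-x) ^ (m+1))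
        (f' := fun x : ℝ => ((k:ℝ)+1) * x ^ k * (1-x)^(m+1) + x^(k+1) * (((m:ℝ)+1) * (1-x)^m * (-1)))
        (fun x _ => by
          have h1 : HasDerivAt (fun x : ℝ => x ^ (k+1)) (((k:ℝ)+1) * x ^ k) x := by
            simpa using hasDerivAt_pow (k+1) x
          have h2 : HasDerivAt (fun x : ℝ => (1-x) ^ (m+1)) (((m:ℝ)+1) * (1-x)^m * (-1)) x := by
            have := ((hasDerivAt_id x).const_sub 1).fun_pow (m+1)
            simpa using this
          simpa [mul_comm, mul_assoc, mul_left_comm] using h1.fun_mul h2)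
        (Continuous.intervalIntegrable (by fun_prop) 0 1)
      simpa using this
    have hsplit : ∫ x in (0:ℝ)..1,
        (((k:ℝ)+1) * x ^ k * (1-x)^(m+1) + x^(k+1) * (((m:ℝ)+1) * (1-x)^m * (-1)))
        = ((k:ℝ)+1) * (∫ x in (0:ℝ)..1, x ^ k * (1-x)^(m+1))
          - ((m:ℝ)+1) * ∫ x in (0:ℝ)..1, x ^ (k+1) * (1-x)^m := by
      rw [integral_add (Continuous.intervalIntegrable (by fun_prop) 0 1)
        (Continuous.intervalIntegrable (by fun_prop) 0 1)]
      rw [show (fun x : ℝ => ((k:ℝ)+1) * x ^ k * (1-x)^(m+1))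
          = fun x : ℝ => ((k:ℝ)+1) * (x ^ k * (1-x)^(m+1)) by funext x; ring]
      rw [show (fun x : ℝ => x^(k+1) * (((m:ℝ)+1) * (1-x)^m * (-1)))
          = fun x : ℝ => (-((m:ℝ)+1)) * (x ^ (k+1) * (1-x)^m) by funext x; ring]
      rw [intervalIntegral.integral_const_mul, intervalIntegral.integral_const_mul]
      ring
    set I := ∫ x in (0:ℝ)..1, x ^ k * (1-x)^(m+1) with hIdef
    rw [hsplit, ih (k+1)] at hftc
    have e : k+1+m+1 = k+(m+1)+1 := by omega
    rw [e] at hftc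
    have hkpos : ((k:ℝ)+1) ≠ 0 := by positivity
    have hF : ((k+(m+1)+1).factorial : ℝ) ≠ 0 := by
      exact_mod_cast Nat.factorial_ne_zero _
    rw [eq_div_iff hF]
    have h4 : ((k:ℝ)+1)*I = ((m:ℝ)+1) * ((↑(k+1).factorial * ↑m.factorial) /
        ((k+(m+1)+1).factorial : ℝ)) := by linarith
    have h3 : ((k:ℝ)+1)*(I*((k+(m+1)+1).factorial : ℝ))
        = ((k:ℝ)+1)*(↑k.factorial * ↑(m+1).factorial) := by
      calc ((k:ℝ)+1)*(I*((k+(m+1)+1).factorial : ℝ))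
          = (((k:ℝ)+1)*I)*((k+(m+1)+1).factorial : ℝ) := by ring
        _ = ((m:ℝ)+1) * ((↑(k+1).factorial * ↑m.factorial) /
            ((k+(m+1)+1).factorial : ℝ)) * ((k+(m+1)+1).factorial : ℝ) := by rw [h4]
        _ = ((m:ℝ)+1) * (↑(k+1).factorial * ↑m.factorial) := by field_simp
        _ = ((k:ℝ)+1)*(↑k.factorial * ↑(m+1).factorial) := by
            rw [Nat.factorial_succ k, Nat.factorial_succ m]; push_cast; ring
    exact mul_left_cancel₀ hkpos h3

end EntropyAux

namespace EntropyAux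

open Filter Topology

/-- Continuity on `[0,1]` of `x ^ (k+1) * (1-x) ^ m * log x`. -/
lemma contF (k m : ℕ) :
    ContinuousOn (fun x : ℝ => x ^ (k+1) * (1-x) ^ m * Real.log x) (Set.Icc 0 1) := by
  intro x hx
  rcases eq_or_lt_of_le hx.1 with h0 | h0
  · subst h0
    have hlim : Tendsto (fun x : ℝ => x ^ (k+1) * (1-x) ^ m * Real.log x)
        (nhdsWithin 0 (Set.Ioi 0)) (nhds 0) := by
      have h1 : Tendsto (fun x : ℝ => Real.log x * x ^ (1:ℝ)) (nhdsWithin 0 (Set.Ioi 0)) (nhds 0) :=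
        tendsto_log_mul_rpow_nhdsGT_zero one_pos
      have h2 : Tendsto (fun x : ℝ => x ^ k * (1-x) ^ m) (nhdsWithin 0 (Set.Ioi 0))
          (nhds ((0:ℝ) ^ k * (1-0) ^ m)) :=
        ((continuous_pow k).mul ((continuous_const.sub continuous_id).pow m)).continuousAt.tendsto.mono_left
          nhdsWithin_le_nhds
      have h3 := h1.mul h2
      rw [zero_mul] at h3
      refine h3.congr' ?_
      filter_upwards [self_mem_nhdsWithin] with y hy
      have : (0:ℝ) < y := hy
      rw [Real.rpow_one]
      ring
    have : ContinuousWithinAt (fun x : ℝ => x ^ (k+1) * (1-x) ^ m * Real.log x)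
        (Set.Ici 0) 0 := by
      unfold ContinuousWithinAt
      rw [show (fun x : ℝ => x ^ (k+1) * (1-x) ^ m * Real.log x) 0 = 0 by simp]
      rw [show Set.Ici (0:ℝ) = insert 0 (Set.Ioi 0) by rw [Set.Ioi_insert]]
      rw [nhdsWithin_insert]
      rw [Filter.tendsto_sup]
      constructor
      · rw [tendsto_pure_left]
        intro s hs
        simpa using mem_of_mem_nhds hs
      · exact hlim
    exact this.mono Set.Icc_subset_Ici_self
  · refine ContinuousAt.continuousWithinAt ?_
    exact (((continuous_pow (k+1)).continuousAt.mul
      ((continuous_const.sub continuous_id).pow m).continuousAt).mul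
      (Real.continuousAt_log h0.ne'))

/-- FTC recursion for the log-Beta integrals. -/
lemma ftcA (k m : ℕ) :
    ((k:ℝ)+1) * (∫ x in (0:ℝ)..1, x ^ k * (1-x) ^ m * Real.log x)
      - (m:ℝ) * (∫ x in (0:ℝ)..1, x ^ (k+1) * (1-x) ^ (m-1) * Real.log x)
      + (k.factorial * m.factorial : ℝ) / (k+m+1).factorial = 0 := by
  have hint : IntervalIntegrable (fun x : ℝ =>
      ((k:ℝ)+1) * (x ^ k * (1-x) ^ m * Real.log x)
        - (m:ℝ) * (x ^ (k+1) * (1-x) ^ (m-1) * Real.log x)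
        + x ^ k * (1-x) ^ m) volume 0 1 :=
    (((intInt k m).const_mul _).sub ((intInt (k+1) (m-1)).const_mul _)).add (contInt k m)
  have hftc : ∫ x in (0:ℝ)..1,
      (((k:ℝ)+1) * (x ^ k * (1-x) ^ m * Real.log x)
        - (m:ℝ) * (x ^ (k+1) * (1-x) ^ (m-1) * Real.log x)
        + x ^ k * (1-x) ^ m) = 0 := by
    have := integral_eq_sub_of_hasDeriv_right_of_le (a := (0:ℝ)) (b := 1) (by norm_num)
      (contF k m)
      (f' := fun x : ℝ => ((k:ℝ)+1) * (x ^ k * (1-x) ^ m * Real.log x)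
        - (m:ℝ) * (x ^ (k+1) * (1-x) ^ (m-1) * Real.log x)
        + x ^ k * (1-x) ^ m)
      (fun x hxm => by
        have hxpos : (0:ℝ) < x := hxm.1
        have h1 : HasDerivAt (fun x : ℝ => x ^ (k+1)) (((k:ℝ)+1) * x ^ k) x := by
          simpa using hasDerivAt_pow (k+1) x
        have h2 : HasDerivAt (fun x : ℝ => (1-x) ^ m) ((m:ℝ) * (1-x) ^ (m-1) * (-1)) x := by
          simpa using ((hasDerivAt_id x).const_sub 1).fun_pow m
        have H := (h1.fun_mul h2).fun_mul (Real.hasDerivAt_log hxpos.ne')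
        refine HasDerivAt.hasDerivWithinAt ?_
        convert H using 1
        rfl
        have hx : x ^ (k+1) * (1-x) ^ m * x⁻¹ = x ^ k * (1-x) ^ m := by
          rw [pow_succ]
          field_simp
        show ((k:ℝ)+1) * (x ^ k * (1-x) ^ m * Real.log x)
            - (m:ℝ) * (x ^ (k+1) * (1-x) ^ (m-1) * Real.log x)
            + x ^ k * (1-x) ^ m = _
        rw [hx]
        ring)
      hint
    rw [this]
    norm_num
  have hsplit : ∫ x in (0:ℝ)..1,
      (((k:ℝ)+1) * (x ^ k * (1-x) ^ m * Real.log x)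
        - (m:ℝ) * (x ^ (k+1) * (1-x) ^ (m-1) * Real.log x)
        + x ^ k * (1-x) ^ m)
      = ((k:ℝ)+1) * (∫ x in (0:ℝ)..1, x ^ k * (1-x) ^ m * Real.log x)
        - (m:ℝ) * (∫ x in (0:ℝ)..1, x ^ (k+1) * (1-x) ^ (m-1) * Real.log x)
        + ∫ x in (0:ℝ)..1, x ^ k * (1-x) ^ m := by
    rw [integral_add (((intInt k m).const_mul _).sub ((intInt (k+1) (m-1)).const_mul _))
      (contInt k m)]
    rw [integral_sub ((intInt k m).const_mul _) ((intInt (k+1) (m-1)).const_mul _)]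
    rw [intervalIntegral.integral_const_mul, intervalIntegral.integral_const_mul]
  rw [hsplit, beta_eval m k] at hftc
  linarith

end EntropyAux

namespace EntropyAux

lemma logint : ∀ m k : ℕ, (∫ x in (0:ℝ)..1, x ^ k * (1-x) ^ m * Real.log x)
    = -((k.factorial * m.factorial : ℝ) / (k+m+1).factorial) *
        ∑ ℓ ∈ Finset.range (m+1), 1/((k:ℝ)+(m:ℝ)+1-(ℓ:ℝ)) := by
  intro m
  induction m with
  | zero =>
    intro k
    have h := ftcA k 0
    simp only [Nat.cast_zero, zero_mul, sub_zero] at h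
    set A := ∫ x in (0:ℝ)..1, x ^ k * (1-x) ^ 0 * Real.log x with hA
    rw [Finset.sum_range_one]
    have hkpos : ((k:ℝ)+1) ≠ 0 := by positivity
    have hF : ((k+0+1).factorial : ℝ) ≠ 0 := by exact_mod_cast Nat.factorial_ne_zero _
    apply mul_left_cancel₀ hkpos
    have hA' : ((k:ℝ)+1) * A = -(↑k.factorial * ↑(Nat.factorial 0) / ((k+0+1).factorial : ℝ)) := by
      linarith
    rw [hA', Nat.factorial_zero]
    rw [show k+0+1 = k+1 from by omega, Nat.factorial_succ k]
    push_cast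
    field_simp
    ring
  | succ m ih =>
    intro k
    have h := ftcA k (m+1)
    simp only [Nat.add_sub_cancel] at h
    rw [ih (k+1)] at h
    rw [show k+1+m+1 = k+(m+1)+1 from by omega] at h
    push_cast at h
    set A := ∫ x in (0:ℝ)..1, x ^ k * (1-x) ^ (m+1) * Real.log x with hA
    set S := ∑ ℓ ∈ Finset.range (m+1), 1/((k:ℝ)+1+(m:ℝ)+1-(ℓ:ℝ)) with hS
    have hsum : ∑ ℓ ∈ Finset.range (m+1+1), 1/((k:ℝ)+(↑(m+1):ℝ)+1-(ℓ:ℝ))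
        = S + 1/((k:ℝ)+1) := by
      rw [Finset.sum_range_succ, hS]
      congr 1
      · apply Finset.sum_congr rfl
        intro ℓ _
        push_cast
        ring
      · push_cast
        ring_nf
    rw [hsum]
    have hkpos : ((k:ℝ)+1) ≠ 0 := by positivity
    have hF : ((k+(m+1)+1).factorial : ℝ) ≠ 0 := by exact_mod_cast Nat.factorial_ne_zero _
    apply mul_left_cancel₀ hkpos
    have hA' : ((k:ℝ)+1) * A
        = ((m:ℝ)+1) * (-(↑(k+1).factorial * ↑m.factorial / ((k+(m+1)+1).factorial : ℝ)) * S)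
          - ↑k.factorial * ↑(m+1).factorial / ((k+(m+1)+1).factorial : ℝ) := by
      -- h should say exactly this up to linear rearrangement
      nlinarith [h]
    rw [hA', Nat.factorial_succ k, Nat.factorial_succ m]
    push_cast
    field_simp
    ring

end EntropyAux


end EntropyAuxSection

/-- The basic entropy integral:
`-(n+1)·binom(n,k)·∫_0^1 p^k (1-p)^(n-k) ln p dp = ∑_{ℓ=0}^{n-k} 1/(n+1-ℓ)`. -/

theorem entropy_integral_eval (n k : ℕ) (hk : k ≤ n) :
    -((n : ℝ) + 1) * (n.choose k : ℝ) *
        ∫ p in (0 : ℝ)..1, p ^ k * (1 - p) ^ (n - k) * Real.log p =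
      ∑ ℓ ∈ Finset.range (n - k + 1), 1 / ((n : ℝ) + 1 - (ℓ : ℝ)) := by
  rw [EntropyAux.logint (n-k) k]
  have hnk : k + (n-k) = n := Nat.add_sub_cancel' hk
  rw [hnk]
  have hcast : ((n-k:ℕ):ℝ) = (n:ℝ) - (k:ℝ) := Nat.cast_sub hk
  have hsum : (∑ ℓ ∈ Finset.range (n-k+1), 1/((k:ℝ)+(↑(n-k):ℝ)+1-(ℓ:ℝ)))
      = ∑ ℓ ∈ Finset.range (n-k+1), 1/((n:ℝ)+1-(ℓ:ℝ)) := by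
    apply Finset.sum_congr rfl
    intro ℓ _
    rw [hcast]
    ring_nf
  rw [hsum]
  set S := ∑ ℓ ∈ Finset.range (n-k+1), 1/((n:ℝ)+1-(ℓ:ℝ)) with hSdef
  have key : (n.choose k * k.factorial * (n-k).factorial : ℕ) = n.factorial :=
    Nat.choose_mul_factorial_mul_factorial hk
  have keyR : ((n.choose k:ℝ) * k.factorial * (n-k).factorial) = n.factorial := by
    exact_mod_cast key
  have hfac : ((n+1).factorial : ℝ) = ((n:ℝ)+1) * n.factorial := by
    rw [Nat.factorial_succ]; push_cast; ring
  have hnf : (n.factorial : ℝ) ≠ 0 := by exact_mod_cast n.factorial_ne_zero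
  have hn1 : ((n:ℝ)+1) ≠ 0 := by positivity
  have coef : -((n:ℝ)+1) * (n.choose k : ℝ) *
      (-(↑k.factorial * ↑(n-k).factorial / ((n+1).factorial : ℝ))) = 1 := by
    rw [hfac]
    field_simp
    linear_combination keyR
  calc -((n:ℝ)+1) * (n.choose k : ℝ) *
        (-(↑k.factorial * ↑(n-k).factorial / ((n+1).factorial : ℝ)) * S)
      = (-((n:ℝ)+1) * (n.choose k : ℝ) *
        (-(↑k.factorial * ↑(n-k).factorial / ((n+1).factorial : ℝ)))) * S := by ring
    _ = 1 * S := by rw [coef]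
    _ = S := one_mul S
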